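/- Let x : ℂ → ℂ be entire, fix z ∈ ℂ, and define Y(t) = ∫_{[0,t]} x(η)·e^{−zη} dη. Then for every integer j ≥ 1 and every t ∈ ℂ, the j-th derivative in t satisfies (d/dt)^j ( e^{zt}·Y(t) ) = z^j·e^{zt}·Y(t) + Σ_{s=1}^{j} C(j,s)·z^{j−s} · Σ_{r=0}^{s−1} C(s−1,r)·(−1)^r·z^r·x^{(s−1−r)}(t), where C(·,·) are binomial coefficients and x^{(m)} is the m-th derivative of x. -/

import Mathlib

open Complex intervalIntegral MeasureTheory Finset

private lemma altZ0' (j k : ℕ) (hk : k < j) :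
    ∑ u ∈ Finset.Icc k j, (-1:ℂ)^(u-k) * (j.choose u) * (u.choose k) = 0 := by
  rw [← Finset.Ico_add_one_right_eq_Icc, Finset.sum_Ico_eq_sum_range]
  have h1 : j + 1 - k = (j - k) + 1 := by omega
  rw [h1]
  have key : ∀ v ∈ Finset.range ((j-k)+1),
      (-1:ℂ)^(k+v-k) * (j.choose (k+v)) * ((k+v).choose k)
        = (j.choose k : ℂ) * ((-1:ℂ)^v * ((j-k).choose v)) := by
    intro v hv
    simp only [Finset.mem_range] at hv
    have hvle : k + v ≤ j := by omega
    have hnat := Nat.choose_mul (n := j) (Nat.le_add_right k v)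
    have h2 : k + v - k = v := by omega
    rw [h2] at hnat ⊢
    have hc : (j.choose (k+v) : ℂ) * ((k+v).choose k : ℂ)
        = (j.choose k : ℂ) * ((j-k).choose v : ℂ) := by
      exact_mod_cast congrArg (Nat.cast (R := ℂ)) hnat
    linear_combination (-1:ℂ)^v * hc
  rw [Finset.sum_congr rfl key, ← Finset.mul_sum]
  have h0 : (j - k : ℕ) ≠ 0 := by omega
  have hz := Int.alternating_sum_range_choose_of_ne h0
  have hzc := congrArg (Int.cast : ℤ → ℂ) hz
  push_cast at hzc
  rw [hzc, mul_zero]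

private lemma altL' (j : ℕ) : ∀ k : ℕ, k < j →
    ∑ s ∈ Finset.Icc (k+1) j, (-1:ℂ)^(s-1-k) * (j.choose s) * ((s-1).choose k) = 1 := by
  induction j with
  | zero => intro k hk; omega
  | succ j ih =>
    intro k hk
    rcases Nat.lt_or_ge k j with hkj | hkj
    · have hsplit : ∀ s ∈ Finset.Icc (k+1) (j+1),
          (-1:ℂ)^(s-1-k) * ((j+1).choose s) * ((s-1).choose k)
            = (-1:ℂ)^(s-1-k) * (j.choose s) * ((s-1).choose k)
              + (-1:ℂ)^(s-1-k) * (j.choose (s-1)) * ((s-1).choose k) := by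
        intro s hs
        simp only [Finset.mem_Icc] at hs
        obtain ⟨s', rfl⟩ : ∃ s', s = s' + 1 := ⟨s - 1, by omega⟩
        rw [Nat.choose_succ_succ' j s']
        push_cast
        ring_nf
      rw [Finset.sum_congr rfl hsplit, Finset.sum_add_distrib]
      have e1 : ∑ s ∈ Finset.Icc (k+1) (j+1),
          (-1:ℂ)^(s-1-k) * (j.choose s) * ((s-1).choose k) = 1 := by
        rw [← Finset.Ico_add_one_right_eq_Icc, Finset.sum_Ico_succ_top (by omega)]
        rw [Nat.choose_succ_self j]
        rw [Finset.Ico_add_one_right_eq_Icc, ih k hkj]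
        simp
      have e2 : ∑ s ∈ Finset.Icc (k+1) (j+1),
          (-1:ℂ)^(s-1-k) * (j.choose (s-1)) * ((s-1).choose k) = 0 := by
        have h3 : ∑ s ∈ Finset.Icc (k+1) (j+1),
            (-1:ℂ)^(s-1-k) * (j.choose (s-1)) * ((s-1).choose k)
            = ∑ u ∈ Finset.Icc k j, (-1:ℂ)^(u-k) * (j.choose u) * (u.choose k) := by
          rw [← Finset.Ico_add_one_right_eq_Icc, ← Finset.Ico_add_one_right_eq_Icc, Finset.sum_Ico_eq_sum_range,
            Finset.sum_Ico_eq_sum_range]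
          apply Finset.sum_congr (by congr 1; omega)
          intro v hv
          simp only [show k + 1 + v - 1 = k + v by omega]
        rw [h3, altZ0' j k hkj]
      rw [e1, e2, add_zero]
    · have hk' : k = j := by omega
      subst hk'
      rw [Finset.Icc_self, Finset.sum_singleton]
      simp

private lemma sumB' (z : ℂ) (X : ℕ → ℂ) (j : ℕ) (hj : 1 ≤ j) :
    ∑ s ∈ Finset.Icc 1 j, (j.choose s : ℂ) * z ^ (j - s) *
      ∑ r ∈ Finset.range s, ((s - 1).choose r : ℂ) * (-1) ^ r * z ^ r * X (s - 1 - r)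
    = ∑ k ∈ Finset.range j, z ^ (j - 1 - k) * X k := by
  have step1 : ∀ s ∈ Finset.Icc 1 j,
      (j.choose s : ℂ) * z ^ (j - s) *
        ∑ r ∈ Finset.range s, ((s - 1).choose r : ℂ) * (-1) ^ r * z ^ r * X (s - 1 - r)
      = ∑ k ∈ Finset.range s,
          (-1:ℂ)^(s-1-k) * (j.choose s) * ((s-1).choose k) * (z ^ (j-1-k) * X k) := by
    intro s hs
    simp only [Finset.mem_Icc] at hs
    rw [← Finset.sum_range_reflect
      (fun r => ((s - 1).choose r : ℂ) * (-1) ^ r * z ^ r * X (s - 1 - r)) s, Finset.mul_sum]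
    apply Finset.sum_congr rfl
    intro k hk
    simp only [Finset.mem_range] at hk
    have h1 : s - 1 - (s - 1 - k) = k := by omega
    have h2 : (s-1).choose (s-1-k) = (s-1).choose k := Nat.choose_symm (by omega)
    have h3 : z ^ (j - s) * z ^ (s - 1 - k) = z ^ (j - 1 - k) := by
      rw [← pow_add]; congr 1; omega
    rw [h1, h2]
    calc (j.choose s : ℂ) * z ^ (j - s) * (((s-1).choose k : ℂ) * (-1)^(s-1-k) * z^(s-1-k) * X k)
        = (-1:ℂ)^(s-1-k) * (j.choose s) * ((s-1).choose k) * ((z ^ (j-s) * z^(s-1-k)) * X k) := by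
          ring
      _ = _ := by rw [h3]
  rw [Finset.sum_congr rfl step1]
  have ext : ∑ s ∈ Finset.Icc 1 j, ∑ k ∈ Finset.range s,
        (-1:ℂ)^(s-1-k) * (j.choose s) * ((s-1).choose k) * (z ^ (j-1-k) * X k)
      = ∑ s ∈ Finset.Ico 0 (j+1), ∑ k ∈ Finset.Ico 0 s,
        (-1:ℂ)^(s-1-k) * (j.choose s) * ((s-1).choose k) * (z ^ (j-1-k) * X k) := by
    rw [Finset.sum_eq_sum_Ico_succ_bot (by omega)]
    simp [Finset.Ico_add_one_right_eq_Icc, Nat.Ico_zero_eq_range]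
  rw [ext, ← Finset.sum_Ico_Ico_comm' 0 (j+1)
    (fun k s => (-1:ℂ)^(s-1-k) * (j.choose s) * ((s-1).choose k) * (z ^ (j-1-k) * X k))]
  rw [Nat.Ico_zero_eq_range, Finset.sum_range_succ]
  simp only [Finset.Ico_self, Finset.sum_empty, add_zero]
  apply Finset.sum_congr rfl
  intro k hk
  simp only [Finset.mem_range] at hk
  rw [Finset.Ico_add_one_right_eq_Icc]
  rw [← Finset.sum_mul (Finset.Icc (k+1) j) _ (z ^ (j-1-k) * X k)]
  rw [altL' j k hk, one_mul]

private lemma hasDerivAt_segment_integral' (g : ℂ → ℂ) (hg : Differentiable ℂ g) (t₀ : ℂ) :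
    HasDerivAt (fun t : ℂ => t * ∫ s in (0:ℝ)..1, g ((s:ℂ) * t)) (g t₀) t₀ := by
  have hg' : Continuous (deriv g) :=
    (hg.contDiff (n := 1)).continuous_deriv le_rfl
  have hgc : Continuous g := hg.continuous
  have cont0 : ∀ t : ℂ, Continuous fun s : ℝ => (s:ℂ) * t := fun t =>
    Complex.continuous_ofReal.mul continuous_const
  have contF : ∀ t : ℂ, Continuous fun s : ℝ => t * g ((s:ℂ) * t) := fun t =>
    continuous_const.mul (hgc.comp (cont0 t))
  have contF' : ∀ t : ℂ, Continuous fun s : ℝ =>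
      g ((s:ℂ) * t) + t * ((s:ℂ) * deriv g ((s:ℂ) * t)) := fun t =>
    (hgc.comp (cont0 t)).add (continuous_const.mul
      (Complex.continuous_ofReal.mul (hg'.comp (cont0 t))))
  have hfun : (fun t : ℂ => t * ∫ s in (0:ℝ)..1, g ((s:ℂ) * t))
      = fun t : ℂ => ∫ s in (0:ℝ)..1, t * g ((s:ℂ) * t) := by
    funext t
    rw [intervalIntegral.integral_const_mul]
  rw [hfun]
  set R : ℝ := ‖t₀‖ + 1 with hR
  obtain ⟨C₁, hC₁⟩ := (isCompact_closedBall (0:ℂ) R).exists_bound_of_continuousOn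
    hgc.continuousOn
  obtain ⟨C₂, hC₂⟩ := (isCompact_closedBall (0:ℂ) R).exists_bound_of_continuousOn
    hg'.continuousOn
  set C := max C₁ 0 with hC
  set D := max C₂ 0 with hD
  have hmem : ∀ (s : ℝ), s ∈ Set.Ioc (0:ℝ) 1 → ∀ t ∈ Metric.ball t₀ 1,
      (s:ℂ) * t ∈ Metric.closedBall (0:ℂ) R := by
    intro s hs t ht
    simp only [Metric.mem_closedBall, dist_zero_right, norm_mul, Complex.norm_real,
      Real.norm_eq_abs]
    have h1 : |s| ≤ 1 := by rw [abs_of_pos hs.1]; exact hs.2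
    have h2 : ‖t‖ ≤ R := by
      have h3 := mem_ball_iff_norm.mp ht
      calc ‖t‖ = ‖t₀ + (t - t₀)‖ := by ring_nf
        _ ≤ ‖t₀‖ + ‖t - t₀‖ := norm_add_le _ _
        _ ≤ R := by rw [hR]; linarith
    calc |s| * ‖t‖ ≤ 1 * R :=
          mul_le_mul h1 h2 (norm_nonneg _) zero_le_one
      _ = R := one_mul R
  have key := intervalIntegral.hasDerivAt_integral_of_dominated_loc_of_deriv_le
    (F := fun (t : ℂ) (s : ℝ) => t * g ((s:ℂ) * t))
    (F' := fun (t : ℂ) (s : ℝ) => g ((s:ℂ) * t) + t * ((s:ℂ) * deriv g ((s:ℂ) * t)))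
    (x₀ := t₀) (a := 0) (b := 1) (μ := MeasureTheory.volume)
    (bound := fun _ => C + R * D) (s := Metric.ball t₀ 1) (Metric.ball_mem_nhds t₀ one_pos)
    (Filter.Eventually.of_forall fun t => ((contF t).aestronglyMeasurable))
    ((contF t₀).intervalIntegrable _ _)
    ((contF' t₀).aestronglyMeasurable)
    ?_ (_root_.intervalIntegrable_const) ?_
  · obtain ⟨-, hd⟩ := key
    have heq : (∫ s in (0:ℝ)..1, (g ((s:ℂ) * t₀) + t₀ * ((s:ℂ) * deriv g ((s:ℂ) * t₀))))
        = g t₀ := by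
      have hder : ∀ s ∈ Set.uIcc (0:ℝ) 1,
          HasDerivAt (fun u : ℝ => (u:ℂ) * g ((u:ℂ) * t₀))
            (g ((s:ℂ) * t₀) + t₀ * ((s:ℂ) * deriv g ((s:ℂ) * t₀))) s := by
        intro s _
        have hin : HasDerivAt (fun w : ℂ => w * t₀) t₀ ((s:ℂ)) := by
          simpa using (hasDerivAt_id ((s:ℂ))).mul_const t₀
        have he : HasDerivAt (fun w : ℂ => w * g (w * t₀))
            (1 * g ((s:ℂ) * t₀) + (s:ℂ) * (deriv g ((s:ℂ)*t₀) * t₀)) (s:ℂ) :=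
          (hasDerivAt_id _).mul ((hg _).hasDerivAt.comp _ hin)
        have he2 := he.comp_ofReal
        have heq2 : (1:ℂ) * g ((s:ℂ) * t₀) + (s:ℂ) * (deriv g ((s:ℂ)*t₀) * t₀)
            = g ((s:ℂ) * t₀) + t₀ * ((s:ℂ) * deriv g ((s:ℂ) * t₀)) := by ring
        rwa [heq2] at he2
      have hint := (contF' t₀).intervalIntegrable (μ := MeasureTheory.volume) (0:ℝ) 1
      have := intervalIntegral.integral_eq_sub_of_hasDerivAt hder hint
      simpa using this
    rwa [heq] at hd
  · filter_upwards with s hs t ht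
    rw [Set.uIoc_of_le (zero_le_one)] at hs
    have hmem' := hmem s hs t ht
    have hb1 : ‖g ((s:ℂ)*t)‖ ≤ C := le_trans (hC₁ _ hmem') (le_max_left _ _)
    have hb2 : ‖deriv g ((s:ℂ)*t)‖ ≤ D := le_trans (hC₂ _ hmem') (le_max_left _ _)
    have hts : ‖t‖ ≤ R := by
      have h2 := mem_ball_iff_norm.mp ht
      calc ‖t‖ = ‖t₀ + (t - t₀)‖ := by ring_nf
        _ ≤ ‖t₀‖ + ‖t - t₀‖ := norm_add_le _ _
        _ ≤ R := by rw [hR]; linarith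
    have hs1 : ‖(s:ℂ)‖ ≤ 1 := by
      simp only [Complex.norm_real, Real.norm_eq_abs]
      rw [abs_of_pos hs.1]; exact hs.2
    calc ‖g ((s:ℂ)*t) + t * ((s:ℂ) * deriv g ((s:ℂ)*t))‖
        ≤ ‖g ((s:ℂ)*t)‖ + ‖t * ((s:ℂ) * deriv g ((s:ℂ)*t))‖ := norm_add_le _ _
      _ ≤ C + R * D := by
          gcongr
          rw [norm_mul, norm_mul]
          calc ‖t‖ * (‖(s:ℂ)‖ * ‖deriv g ((s:ℂ)*t)‖) ≤ R * (1 * D) := by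
                apply mul_le_mul hts _ (by positivity) (by positivity)
                exact mul_le_mul hs1 hb2 (norm_nonneg _) zero_le_one
            _ = R * D := by ring
  · filter_upwards with s hs t ht
    have h1 : HasDerivAt (fun t : ℂ => (s:ℂ) * t) ((s:ℂ)) t := by
      simpa using (hasDerivAt_id t).const_mul ((s:ℂ))
    have h2 : HasDerivAt (fun t : ℂ => g ((s:ℂ) * t)) (deriv g ((s:ℂ)*t) * (s:ℂ)) t :=
      (hg _).hasDerivAt.comp t h1
    have h3 := (hasDerivAt_id t).mul h2
    simp only [id_eq] at h3
    have heq3 : (1:ℂ) * g ((s:ℂ)*t) + t * (deriv g ((s:ℂ)*t) * (s:ℂ))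
        = g ((s:ℂ) * t) + t * ((s:ℂ) * deriv g ((s:ℂ) * t)) := by ring
    rwa [heq3] at h3

theorem iteratedDeriv_exp_mul_segment_integral
    (x : ℂ → ℂ) (hx : Differentiable ℂ x) (z : ℂ)
    (Y : ℂ → ℂ)
    (hY : Y = fun t => t * ∫ s in (0:ℝ)..1, x ((s : ℂ) * t) * Complex.exp (-z * ((s : ℂ) * t))) :
    ∀ j : ℕ, 1 ≤ j → ∀ t : ℂ,
      iteratedDeriv j (fun w => Complex.exp (z * w) * Y w) t =
        z ^ j * Complex.exp (z * t) * Y t +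
          ∑ s ∈ Finset.Icc 1 j, (j.choose s : ℂ) * z ^ (j - s) *
            ∑ r ∈ Finset.range s,
              ((s - 1).choose r : ℂ) * (-1) ^ r * z ^ r * iteratedDeriv (s - 1 - r) x t := by
  set g : ℂ → ℂ := fun w => x w * Complex.exp (-z * w) with hg
  have hgdiff : Differentiable ℂ g :=
    hx.mul ((differentiable_id.const_mul (-z)).cexp)
  have hYd : ∀ t : ℂ, HasDerivAt Y (g t) t := by
    intro t
    rw [hY]
    exact hasDerivAt_segment_integral' g hgdiff t
  have hYdiff : Differentiable ℂ Y := fun t => (hYd t).differentiableAt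
  set F : ℂ → ℂ := fun w => Complex.exp (z * w) * Y w with hF
  have hFdiff : Differentiable ℂ F :=
    ((differentiable_id.const_mul z).cexp).mul hYdiff
  have hFd : ∀ w : ℂ, HasDerivAt F (z * F w + x w) w := by
    intro w
    have h1 : HasDerivAt (fun w : ℂ => z * w) z w := by
      simpa using (hasDerivAt_id w).const_mul z
    have h2 : HasDerivAt (fun w : ℂ => Complex.exp (z * w)) (Complex.exp (z * w) * z) w :=
      h1.cexp
    have h3 := h2.mul (hYd w)
    have hcancel : Complex.exp (z * w) * g w = x w := by
      rw [hg]
      calc Complex.exp (z * w) * (x w * Complex.exp (-z * w))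
          = x w * (Complex.exp (z * w) * Complex.exp (-z * w)) := by ring
        _ = x w := by rw [← Complex.exp_add]; ring_nf; simp
    have heq : Complex.exp (z * w) * z * Y w + Complex.exp (z * w) * g w
        = z * F w + x w := by
      rw [hcancel, hF]; ring
    rwa [heq] at h3
  have hderivF : deriv F = fun w => z * F w + x w := funext fun w => (hFd w).deriv
  -- main induction
  have main : ∀ j : ℕ, ∀ t : ℂ, iteratedDeriv j F t
      = z ^ j * F t + ∑ k ∈ Finset.range j, z ^ (j - 1 - k) * iteratedDeriv k x t := by
    intro j
    induction j with
    | zero => intro t; simp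
    | succ j ih =>
      intro t
      rw [iteratedDeriv_succ', hderivF]
      have hxc : ContDiff ℂ (j : ℕ∞) x := hx.contDiff
      have hFc : ContDiff ℂ (j : ℕ∞) F := hFdiff.contDiff
      have hsmul : ContDiff ℂ (j : ℕ∞) (fun w => z * F w) := hFc.const_smul z
      have hadd : iteratedDeriv j (fun w => z * F w + x w) t
          = z * iteratedDeriv j F t + iteratedDeriv j x t := by
        rw [← iteratedDerivWithin_univ, ← iteratedDerivWithin_univ, ← iteratedDerivWithin_univ]
        rw [show (fun w => z * F w + x w) = (fun w => z * F w) + x from rfl]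
        rw [iteratedDerivWithin_add (n := j) (Set.mem_univ t) uniqueDiffOn_univ
          (ContDiff.of_le hsmul (by simp)).contDiffWithinAt (ContDiff.of_le hxc (by simp)).contDiffWithinAt]
        rw [iteratedDerivWithin_const_mul (n := j) (Set.mem_univ t) uniqueDiffOn_univ z (ContDiff.of_le hFc (by simp)).contDiffWithinAt]
      rw [hadd, ih t]
      rw [Finset.sum_range_succ]
      have hlast : z ^ (j + 1 - 1 - j) * iteratedDeriv j x t = iteratedDeriv j x t := by
        simp
      rw [hlast, mul_add, Finset.mul_sum]
      have hsum : ∀ k ∈ Finset.range j,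
          z * (z ^ (j - 1 - k) * iteratedDeriv k x t)
            = z ^ (j + 1 - 1 - k) * iteratedDeriv k x t := by
        intro k hk
        simp only [Finset.mem_range] at hk
        rw [← mul_assoc, ← pow_succ']
        congr 2
        omega
      rw [Finset.sum_congr rfl hsum]
      ring
  intro j hj t
  rw [main j t, sumB' z (fun k => iteratedDeriv k x t) j hj, hF]
  ring
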